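/- Let ρ_- > 0 and u_- > u_+. For γ ∈ (0,1) define ρ_*(γ) = (u_- - u_+ + ρ_-^γ)^{1/γ} and the shock speed σ_1(γ) = u_+ - ρ_-(u_- - u_+)/(ρ_*(γ) - ρ_-). Then lim_{γ→0+} σ_1(γ) = u_+, i.e. the 1-shock speed σ_1, the contact-discontinuity speed σ_2 = u_+ and the intermediate velocity u_* = u_+ all have the common limit u_+ as γ → 0+. -/
import Mathlib


open Filter Topology

/-- The intermediate density of the Aw–Rascle Riemann solution:
`ρ_*(γ) = (u_- - u_+ + ρ_-^γ)^(1/γ)`. -/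
noncomputable def rhoStar (ρm um up γ : ℝ) : ℝ := (um - up + ρm ^ γ) ^ (1 / γ)

/-- The 1-shock speed `σ_1(γ) = u_+ - ρ_-(u_- - u_+)/(ρ_*(γ) - ρ_-)`. -/
noncomputable def sigma1 (ρm um up γ : ℝ) : ℝ :=
  up - ρm * (um - up) / (rhoStar ρm um up γ - ρm)

/-- For `ρ_- > 0`, `ρ_+ > 0`, `u_- > u_+`: as `γ → 0+` the 1-shock speed `σ_1(γ)`,
the contact discontinuity speed `σ_2 = u_+` and the intermediate velocity `u_* = u_+`
all tend to the common limit `u_+`. -/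
theorem stmt1 (ρm ρp um up : ℝ) (hρm : 0 < ρm) (hρp : 0 < ρp) (hu : up < um) :
    Tendsto (fun γ : ℝ => sigma1 ρm um up γ) (𝓝[>] 0) (𝓝 up) ∧
    Tendsto (fun _ : ℝ => up) (𝓝[>] 0) (𝓝 up) ∧
    Tendsto (fun _ : ℝ => up) (𝓝[>] 0) (𝓝 up) := by
  refine ⟨?_, tendsto_const_nhds, tendsto_const_nhds⟩
  set c := um - up with hc
  have hc0 : 0 < c := by linarith
  -- base tends to c + 1
  have hbase : Tendsto (fun γ : ℝ => c + ρm ^ γ) (𝓝[>] 0) (𝓝 (c + 1)) := by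
    have : Tendsto (fun γ : ℝ => ρm ^ γ) (𝓝 0) (𝓝 1) := by
      have hcont : ContinuousAt (fun γ : ℝ => ρm ^ γ) 0 :=
        Real.continuousAt_const_rpow hρm.ne'
      simpa using hcont.tendsto
    exact (tendsto_const_nhds.add (this.mono_left nhdsWithin_le_nhds))
  -- eventually base ≥ 1 + c/2
  have hev : ∀ᶠ γ in 𝓝[>] (0:ℝ), 1 + c / 2 ≤ c + ρm ^ γ :=
    hbase.eventually (eventually_ge_nhds (by linarith))
  have hRS : Tendsto (fun γ : ℝ => rhoStar ρm um up γ) (𝓝[>] 0) atTop := by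
    have hlow : Tendsto (fun γ : ℝ => (1 + c / 2) ^ (1 / γ)) (𝓝[>] 0) atTop := by
      have h1 : Tendsto (fun γ : ℝ => 1 / γ) (𝓝[>] (0:ℝ)) atTop := by
        simpa [one_div] using tendsto_inv_nhdsGT_zero
      have hb : (0:ℝ) < 1 + c / 2 := by linarith
      have hexp : Tendsto (fun γ : ℝ => Real.exp (Real.log (1 + c / 2) * (1 / γ)))
          (𝓝[>] 0) atTop :=
        Real.tendsto_exp_atTop.comp (h1.const_mul_atTop (Real.log_pos (by linarith)))
      refine hexp.congr fun γ => ?_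
      rw [Real.rpow_def_of_pos hb]
    refine tendsto_atTop_mono' _ ?_ hlow
    filter_upwards [hev, self_mem_nhdsWithin] with γ hγ (hγ0 : 0 < γ)
    exact Real.rpow_le_rpow (by linarith) hγ (by positivity)
  have hdiv : Tendsto (fun γ : ℝ => ρm * c / (rhoStar ρm um up γ - ρm)) (𝓝[>] 0) (𝓝 0) :=
    Tendsto.div_atTop tendsto_const_nhds (tendsto_atTop_add_const_right _ _ hRS)
  have h := (tendsto_const_nhds : Tendsto (fun _ : ℝ => up) (𝓝[>] (0:ℝ)) (𝓝 up)).sub hdiv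
  simpa [sigma1, hc] using h
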